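/- Let 1 ≤ l ≤ m−1 and let V_1^{⊗l} denote the l-fold tensor product of the two-dimensional simple kD_n-module V_1 with itself (diagonal D_n-action). Then: (1) if l = 2r−1 is odd, V_1^{⊗(2r−1)} ≅ ⊕_{j=1}^{r} C(2r−1, r−j) · V_{2j−1}; (2) if l = 2r is even, V_1^{⊗2r} ≅ C(2r−1, r−1) · (V_ε ⊕ V_λ) ⊕ (⊕_{j=1}^{r} C(2r, r−j) · V_{2j}), where C(n,k) denotes the binomial coefficient and n·V the direct sum of n copies of V. -/

import Mathlib

open scoped TensorProduct

namespace HopfOrePaper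

/-- A representation of `G` on `V` is simple (irreducible): `V ≠ 0` and the only
`G`-stable subspaces are `0` and `V`. -/
def IsSimpleRep {k G V : Type} [Field k] [Group G] [AddCommGroup V] [Module k V]
    (ρ : Representation k G V) : Prop :=
  Nontrivial V ∧ ∀ p : Submodule k V, (∀ g : G, ∀ v ∈ p, ρ g v ∈ p) → p = ⊥ ∨ p = ⊤

/-- Isomorphism of representations. -/
def RepIso {k G V V' : Type} [Field k] [Group G] [AddCommGroup V] [Module k V]
    [AddCommGroup V'] [Module k V'] (ρ : Representation k G V)
    (ρ' : Representation k G V') : Prop :=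
  ∃ f : V ≃ₗ[k] V', ∀ (g : G) (v : V), f (ρ g v) = ρ' g (f v)

/-- `IsTwistIso χ t ρ ρ'` says that `ρ' ≅ V_{χ^t} ⊗ ρ` as representations of `G`. -/
def IsTwistIso {k G V V' : Type} [Field k] [Group G] [AddCommGroup V] [Module k V]
    [AddCommGroup V'] [Module k V'] (χ : G →* kˣ) (t : ℤ)
    (ρ : Representation k G V) (ρ' : Representation k G V') : Prop :=
  ∃ f : V ≃ₗ[k] V', ∀ (g : G) (v : V), ρ' g (f v) = ((χ g ^ t : kˣ) : k) • f (ρ g v)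

/-- `ρ` and `ρ'` lie in the same class of the equivalence `∼` on simple modules,
i.e. `ρ' ≅ V_{χ^t} ⊗ ρ` for some `t ∈ ℤ` (i.e. `[i] = [j]`). -/
def TwistEquiv {k G V V' : Type} [Field k] [Group G] [AddCommGroup V] [Module k V]
    [AddCommGroup V'] [Module k V'] (χ : G →* kˣ)
    (ρ : Representation k G V) (ρ' : Representation k G V') : Prop :=
  ∃ t : ℤ, IsTwistIso χ t ρ ρ'

/-- A presentation of the Hopf–Ore extension `H = kG(χ⁻¹, a, 0)`:
`H` is a `k`-algebra containing the group algebra `kG` and an element `x` with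
`x·g = χ⁻¹(g)·g·x`, and with `k`-basis `{g xⁱ | g ∈ G, i ∈ ℕ}`. -/
structure HopfOre (k G H : Type) [Field k] [Group G] [Ring H] [Algebra k H]
    (χ : G →* kˣ) : Type where
  emb : MonoidAlgebra k G →ₐ[k] H
  x : H
  comm_rel : ∀ g : G, x * emb (MonoidAlgebra.of k G g)
      = (((χ g)⁻¹ : kˣ) : k) • (emb (MonoidAlgebra.of k G g) * x)
  basis_li : LinearIndependent k fun p : G × ℕ => emb (MonoidAlgebra.of k G p.1) * x ^ p.2
  basis_span :
    Submodule.span k (Set.range fun p : G × ℕ => emb (MonoidAlgebra.of k G p.1) * x ^ p.2) = ⊤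

variable {k G H : Type} [Field k] [Group G] [Ring H] [Algebra k H] {χ : G →* kˣ}

/-- `IsStdQuot HO ρ e c d` says that the `H`-module `W` is (a copy of) the quotient module
`M(V)/cM(V)` of `M(V) = H ⊗_{kG} V`, where `c` is a (central) polynomial in `x` of degree `d`
(of the form `x^t` or `(x^s - β)^r`): `e` is a `kG`-equivariant embedding of `V` into `W`,
`c` annihilates `W`, and `W = ⊕_{j=0}^{d-1} xʲ·e(V)`. -/
structure IsStdQuot (HO : HopfOre k G H χ) {V W : Type}
    [AddCommGroup V] [Module k V]
    [AddCommGroup W] [Module k W] [Module H W] [IsScalarTower k H W]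
    (ρ : Representation k G V) (e : V →ₗ[k] W) (c : H) (d : ℕ) : Prop where
  equivariant : ∀ (g : G) (v : V), e (ρ g v) = HO.emb (MonoidAlgebra.of k G g) • e v
  ann : ∀ w : W, c • w = 0
  xbasis : Function.Bijective fun f : Fin d → V => ∑ j : Fin d, HO.x ^ (j : ℕ) • e (f j)

/-- A witness exhibiting the `H`-module `W` as a standard quotient module
`M(V_i)/cM(V_i)` for some finite-dimensional simple `kG`-module `V_i`. -/
structure StdWitness (HO : HopfOre k G H χ) (W : Type)
    [AddCommGroup W] [Module k W] [Module H W] [IsScalarTower k H W]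
    (c : H) (d : ℕ) : Type 1 where
  V : Type
  [acg : AddCommGroup V]
  [modk : Module k V]
  ρ : Representation k G V
  fin : FiniteDimensional k V
  simple : IsSimpleRep ρ
  e : V →ₗ[k] W
  std : IsStdQuot HO ρ e c d

/-- The representation of `G` obtained from an `H`-module by restriction along
`kG → H`. -/
noncomputable def resRep (HO : HopfOre k G H χ) (M : Type) [AddCommGroup M] [Module k M]
    [Module H M] [IsScalarTower k H M] : Representation k G M where
  toFun g :=
    { toFun := fun m => HO.emb (MonoidAlgebra.of k G g) • m
      map_add' := fun m n => smul_add _ m n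
      map_smul' := fun c m => by
        simp only [RingHom.id_apply]
        exact (smul_comm c (HO.emb (MonoidAlgebra.of k G g)) m).symm }
  map_one' := by
    ext m
    simp only [LinearMap.coe_mk, AddHom.coe_mk, LinearMap.id_coe, id_eq, Module.End.one_apply]
    rw [map_one, map_one, one_smul]
  map_mul' g h := by
    ext m
    simp only [LinearMap.coe_mk, AddHom.coe_mk, Module.End.mul_apply]
    rw [map_mul, map_mul, mul_smul]

/-- A module over a ring is indecomposable. -/
def IsIndecomposableMod (R M : Type) [Ring R] [AddCommGroup M] [Module R M] : Prop :=
  Nontrivial M ∧ ∀ p q : Submodule R M, IsCompl p q → p = ⊥ ∨ q = ⊥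

/-- A module is uniserial if its submodules form a chain. -/
def IsUniserial (R M : Type) [Ring R] [AddCommGroup M] [Module R M] : Prop :=
  ∀ p q : Submodule R M, p ≤ q ∨ q ≤ p

/-- The radical of a module: the intersection of its maximal submodules. -/
def modRadical (R M : Type) [Ring R] [AddCommGroup M] [Module R M] : Submodule R M :=
  sInf {p : Submodule R M | IsCoatom p}

/-- The socle of a module: the sum of its simple submodules. -/
def modSocle (R M : Type) [Ring R] [AddCommGroup M] [Module R M] : Submodule R M :=
  sSup {p : Submodule R M | IsAtom p}

/-- The radical series `M ⊇ rad M ⊇ rad² M ⊇ ⋯` of a module. -/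
noncomputable def radIter (R M : Type) [Ring R] [AddCommGroup M] [Module R M] :
    ℕ → Submodule R M
  | 0 => ⊤
  | j + 1 => Submodule.map (radIter R M j).subtype (modRadical R (radIter R M j))

/-- The submodule `c•M` of a module `M` (for `c` a central, or normalizing, element). -/
def smulRange {M : Type} (R : Type) [Ring R] [AddCommGroup M] [Module R M] (c : R) :
    Submodule R M :=
  Submodule.span R (Set.range fun m : M => c • m)

/-- The subquotient `q/p` associated with submodules `p ≤ q`. -/
abbrev sectionQuot {R M : Type} [Ring R] [AddCommGroup M] [Module R M]
    (p q : Submodule R M) :=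
  ↥q ⧸ (Submodule.comap q.subtype p)

/-- The hypothesis that a given `H`-module structure on `M ⊗[k] N` is the one obtained
from the `H`-module structures of `M` and `N` via the comultiplication of
`H = kG(χ⁻¹,a,0)`, i.e. `Δ(g) = g ⊗ g` and `Δ(x) = x ⊗ a + 1 ⊗ x`. -/
structure TensorAct (HO : HopfOre k G H χ) (a : G) (M N : Type)
    [AddCommGroup M] [Module k M] [Module H M] [IsScalarTower k H M]
    [AddCommGroup N] [Module k N] [Module H N] [IsScalarTower k H N]
    [Module H (M ⊗[k] N)] [IsScalarTower k H (M ⊗[k] N)] : Prop where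
  g_tmul : ∀ (g : G) (m : M) (n : N),
    HO.emb (MonoidAlgebra.of k G g) • (m ⊗ₜ[k] n)
      = (HO.emb (MonoidAlgebra.of k G g) • m) ⊗ₜ[k] (HO.emb (MonoidAlgebra.of k G g) • n)
  x_tmul : ∀ (m : M) (n : N),
    HO.x • (m ⊗ₜ[k] n)
      = (HO.x • m) ⊗ₜ[k] (HO.emb (MonoidAlgebra.of k G a) • n) + m ⊗ₜ[k] (HO.x • n)

/-- The twist of a representation by the `t`-th power of a character: this is the
representation `V_{χ^t} ⊗ ρ`, realized on the same space (`σ^t` applied to `ρ`). -/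
def twistRep {k G V : Type} [Field k] [Group G] [AddCommGroup V] [Module k V]
    (χ : G →* kˣ) (t : ℤ) (ρ : Representation k G V) : Representation k G V where
  toFun g := ((χ g ^ t : kˣ) : k) • ρ g
  map_one' := by simp
  map_mul' g h := by
    ext v
    simp only [map_mul, mul_zpow, Units.val_mul, LinearMap.smul_apply, Module.End.mul_apply,
      map_smul, smul_smul, mul_comm]

/-- The one-dimensional representation attached to a linear character. -/
def charRep (k : Type) {G : Type} [Field k] [Group G] (μ : G →* kˣ) :
    Representation k G k where
  toFun g := ((μ g : k) • LinearMap.id)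
  map_one' := by
    simp only [map_one, Units.val_one, one_smul]
    rfl
  map_mul' g h := by
    ext
    simp [mul_smul, mul_comm]

/-- `SubRepIso ρT p ρ` : `p` is a `G`-stable subspace of the representation `ρT`
and, as a representation of `G`, it is isomorphic to `ρ`. -/
def SubRepIso {k G X V : Type} [Field k] [Group G] [AddCommGroup X] [Module k X]
    [AddCommGroup V] [Module k V]
    (ρT : Representation k G X) (p : Submodule k X) (ρ : Representation k G V) : Prop :=
  (∀ g : G, ∀ y ∈ p, ρT g y ∈ p) ∧
  ∃ f : V ≃ₗ[k] ↥p, ∀ (g : G) (v : V), (f (ρ g v) : X) = ρT g (f v)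


/-- The `l`-fold tensor power of a representation (with diagonal `G`-action). -/
noncomputable def piTensorRep {k G V : Type} [Field k] [Group G] [AddCommGroup V]
    [Module k V] (ρ : Representation k G V) (l : ℕ) :
    Representation k G (PiTensorProduct k fun _ : Fin l => V) where
  toFun g := PiTensorProduct.map fun _ => ρ g
  map_one' := by
    show PiTensorProduct.map (fun _ : Fin l => ρ 1) = 1
    rw [show (fun _ : Fin l => ρ 1) = fun _ : Fin l => (LinearMap.id : V →ₗ[k] V) from by
      funext _; rw [map_one]; rfl]
    rw [PiTensorProduct.map_id]
    rfl
  map_mul' g h := by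
    show PiTensorProduct.map (fun _ : Fin l => ρ (g * h))
        = PiTensorProduct.map (fun _ : Fin l => ρ g) * PiTensorProduct.map (fun _ : Fin l => ρ h)
    rw [show (fun _ : Fin l => ρ (g * h)) = fun _ : Fin l => (ρ g ∘ₗ ρ h : V →ₗ[k] V) from by
      funext _; rw [map_mul]; rfl]
    rw [PiTensorProduct.map_comp]
    rfl



/-! ### Auxiliary lemmas for the proof of `stmt_18` -/

section Aux

lemma dihedral_closure {n : ℕ} [NeZero n] (C : DihedralGroup n → Prop) (h1 : C 1)
    (hmul : ∀ g h, C g → C h → C (g * h)) (hr : C (.r 1)) (hs : C (.sr 0)) :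
    ∀ g, C g := by
  have hrj : ∀ j : ℕ, C (.r (j : ZMod n)) := by
    intro j
    induction j with
    | zero => rw [Nat.cast_zero, ← DihedralGroup.one_def]; exact h1
    | succ j ih =>
        have := hmul _ _ ih hr
        rw [DihedralGroup.r_mul_r] at this
        convert this using 2
        push_cast
        ring
  intro g
  cases g with
  | r i => rw [← ZMod.natCast_zmod_val i]; exact hrj i.val
  | sr i =>
      have := hmul _ _ hs (hrj i.val)
      rw [DihedralGroup.sr_mul_r, zero_add, ZMod.natCast_zmod_val] at this
      exact this

lemma span_partition {k ι S X : Type} [Field k] [AddCommGroup X] [Module k X]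
    {v : ι → X} (hli : LinearIndependent k v) (hsp : ⊤ ≤ Submodule.span k (Set.range v))
    (F : S → Set ι) (hdisj : ∀ s t, s ≠ t → Disjoint (F s) (F t))
    (hcov : ∀ i, ∃ s, i ∈ F s) :
    iSupIndep (fun s => Submodule.span k (v '' F s)) ∧
      (⨆ s, Submodule.span k (v '' F s)) = ⊤ := by
  constructor
  · intro s
    have h1 : (⨆ (t) (_ : t ≠ s), Submodule.span k (v '' F t))
        ≤ Submodule.span k (v '' (F s)ᶜ) := by
      refine iSup₂_le fun t ht => Submodule.span_mono (Set.image_mono ?_)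
      intro i hi
      exact fun hic => Set.disjoint_left.mp (hdisj t s ht) hi hic
    exact (hli.disjoint_span_image disjoint_compl_right).mono_right h1
  · rw [← Submodule.span_iUnion]
    refine le_antisymm le_top (le_trans hsp (Submodule.span_mono ?_))
    rintro _ ⟨i, rfl⟩
    obtain ⟨s, hsmem⟩ := hcov i
    exact Set.mem_iUnion.mpr ⟨s, Set.mem_image_of_mem v hsmem⟩

lemma pair_comb_ne_zero {k X : Type} [Field k] [AddCommGroup X] [Module k X] {u w : X}
    (h : LinearIndependent k ![u, w]) (a b : k) (ha : a ≠ 0) : a • u + b • w ≠ 0 := by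
  intro h0
  apply ha
  have := Fintype.linearIndependent_iff.mp h ![a, b] ?_ 0
  · simpa using this
  · simpa [Fin.sum_univ_two] using h0

lemma vec2_inj {α : Type} {x y : α} (h : x ≠ y) : Function.Injective ![x, y] := by
  intro a b hab
  fin_cases a <;> fin_cases b <;> simp_all

lemma scal_hi {k : Type} [Field k] {ω : k} (hω : ω ≠ 0) (o d : ℕ) :
    ω ^ (o + d) * (ω⁻¹) ^ o = ω ^ d := by
  rw [pow_add, inv_pow]
  field_simp

lemma scal_lo {k : Type} [Field k] {ω : k} (hω : ω ≠ 0) (o d : ℕ) :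
    ω ^ o * (ω⁻¹) ^ (o + d) = (ω ^ d)⁻¹ := by
  rw [pow_add, inv_pow, inv_pow]
  field_simp

noncomputable def btp (k : Type) [Field k] (l : ℕ) (f : Fin l → Fin 2) :
    PiTensorProduct k fun _ : Fin l => (Fin 2 → k) :=
  PiTensorProduct.tprod k fun i => Pi.single (f i) 1

noncomputable def phiTP (k : Type) [Field k] (l : ℕ) (f : Fin l → Fin 2) :
    (PiTensorProduct k fun _ : Fin l => (Fin 2 → k)) →ₗ[k] k :=
  PiTensorProduct.lift ((MultilinearMap.mkPiAlgebra k (Fin l) k).compLinearMap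
    fun i => LinearMap.proj (f i))

lemma phiTP_btp {k : Type} [Field k] {l : ℕ} (f g : Fin l → Fin 2) :
    phiTP k l f (btp k l g) = if f = g then 1 else 0 := by
  rw [btp, phiTP, PiTensorProduct.lift.tprod]
  simp only [MultilinearMap.compLinearMap_apply, MultilinearMap.mkPiAlgebra_apply,
    LinearMap.proj_apply, Pi.single_apply]
  by_cases h : f = g
  · subst h
    rw [if_pos rfl]
    exact Finset.prod_eq_one fun i _ => by rw [if_pos rfl]
  · rw [if_neg h]
    obtain ⟨i, hi⟩ := Function.ne_iff.mp h
    exact Finset.prod_eq_zero (Finset.mem_univ i) (by rw [if_neg hi])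

lemma btp_li (k : Type) [Field k] (l : ℕ) : LinearIndependent k (btp k l) := by
  rw [Fintype.linearIndependent_iff]
  intro g hg f
  have h2 := congrArg (phiTP k l f) hg
  rw [map_sum, map_zero] at h2
  symm
  simpa [phiTP_btp, Finset.sum_ite_eq] using h2.symm

lemma btp_expand {k : Type} [Field k] {l : ℕ} (v : Fin l → (Fin 2 → k)) :
    PiTensorProduct.tprod k v = ∑ f : Fin l → Fin 2, (∏ i, v i (f i)) • btp k l f := by
  have hv : v = fun i => ∑ j : Fin 2, v i j • (Pi.single j 1 : Fin 2 → k) := by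
    funext i x
    rw [Finset.sum_apply]
    simp only [Pi.smul_apply, Pi.single_apply, smul_eq_mul, mul_ite, mul_one, mul_zero]
    rw [Finset.sum_ite_eq Finset.univ x (v i)]
    simp
  conv_lhs => rw [hv]
  rw [MultilinearMap.map_sum (PiTensorProduct.tprod k)]
  congr 1; funext f
  rw [MultilinearMap.map_smul_univ]
  rfl

lemma btp_span (k : Type) [Field k] (l : ℕ) :
    ⊤ ≤ Submodule.span k (Set.range (btp k l)) := by
  rw [← PiTensorProduct.span_tprod_eq_top]
  rw [Submodule.span_le]
  rintro _ ⟨v, rfl⟩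
  rw [btp_expand]
  exact Submodule.sum_mem _ fun f _ =>
    Submodule.smul_mem _ _ (Submodule.subset_span (Set.mem_range_self f))

lemma btp_finrank (k : Type) [Field k] (l : ℕ) :
    Fintype.card (Fin l → Fin 2)
      = Module.finrank k (PiTensorProduct k fun _ : Fin l => (Fin 2 → k)) := by
  have b : Module.Basis (Fin l → Fin 2) k (PiTensorProduct k fun _ : Fin l => (Fin 2 → k)) :=
    Module.Basis.mk (btp_li k l) (btp_span k l)
  rw [Module.finrank_eq_card_basis b]

def wt {l : ℕ} (f : Fin l → Fin 2) : ℕ := ∑ i, (f i : ℕ)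

def flip2 {l : ℕ} (f : Fin l → Fin 2) : Fin l → Fin 2 := fun i => f i + 1

lemma flip2_flip2 {l : ℕ} (f : Fin l → Fin 2) : flip2 (flip2 f) = f := by
  funext i
  show f i + 1 + 1 = f i
  have h : ∀ x : Fin 2, x + 1 + 1 = x := by decide
  exact h (f i)

lemma flip2_inj {l : ℕ} {f g : Fin l → Fin 2} (h : flip2 f = flip2 g) : f = g := by
  have := congrArg flip2 h
  rwa [flip2_flip2, flip2_flip2] at this

lemma wt_add_wt_flip2 {l : ℕ} (f : Fin l → Fin 2) : wt f + wt (flip2 f) = l := by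
  rw [wt, wt, ← Finset.sum_add_distrib]
  have h1 : ∀ x : Fin 2, (x : ℕ) + ((x + 1 : Fin 2) : ℕ) = 1 := by decide
  simp only [flip2, h1]
  simp

lemma wt_le {l : ℕ} (f : Fin l → Fin 2) : wt f ≤ l := by
  calc wt f ≤ ∑ _i : Fin l, 1 := Finset.sum_le_sum fun i _ => by omega
  _ = l := by simp

lemma fin2_cases (x : Fin 2) : x = 0 ∨ x = 1 := by revert x; decide

lemma card_wt (l w : ℕ) :
    Fintype.card {f : Fin l → Fin 2 // wt f = w} = l.choose w := by
  have hval : ∀ x : Fin 2, (x : ℕ) = if x = 1 then 1 else 0 := by decide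
  have E : {f : Fin l → Fin 2 // wt f = w} ≃ {s : Finset (Fin l) // s.card = w} :=
    { toFun := fun ⟨f, h⟩ => ⟨Finset.univ.filter fun i => f i = 1, by
        rw [Finset.card_filter, ← h, wt]
        exact Finset.sum_congr rfl fun i _ => (hval (f i)).symm⟩
      invFun := fun ⟨s, h⟩ => ⟨fun i => if i ∈ s then 1 else 0, by
        rw [wt, ← h, Finset.card_eq_sum_ones]
        simp only [apply_ite (Fin.val), Fin.val_one, Fin.val_zero]
        rw [Finset.sum_ite_mem, Finset.univ_inter]⟩
      left_inv := by
        rintro ⟨f, h⟩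
        ext i
        simp only [Finset.mem_filter, Finset.mem_univ, true_and]
        rcases fin2_cases (f i) with h0 | h1
        · rw [h0]; simp
        · rw [h1]; simp
      right_inv := by
        rintro ⟨s, h⟩
        ext i
        simp only [Finset.mem_filter, Finset.mem_univ, true_and]
        by_cases hi : i ∈ s <;> simp [hi] }
  rw [Fintype.card_congr E, Fintype.card_finset_len, Fintype.card_fin]

lemma choose_central (r : ℕ) (hr : 1 ≤ r) :
    (2 * r).choose r = 2 * ((2 * r - 1).choose (r - 1)) := by
  obtain ⟨s, rfl⟩ : ∃ s, r = s + 1 := ⟨r - 1, by omega⟩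
  have h1 : 2 * (s + 1) = (2 * s + 1) + 1 := by ring
  rw [h1, Nat.choose_succ_succ]
  have h2 : (2 * s + 1).choose (s + 1) = (2 * s + 1).choose s := by
    have h6 := Nat.choose_symm (n := 2 * s + 1) (k := s + 1) (by omega)
    have h3 : 2 * s + 1 - (s + 1) = s := by omega
    rw [h3] at h6
    exact h6.symm
  have h4 : 2 * s + 1 + 1 - 1 = 2 * s + 1 := by omega
  have h5 : s + 1 - 1 = s := by omega
  rw [h2, h4, h5]
  ring

lemma card_half (r : ℕ) (hr : 1 ≤ r) (i0 : Fin (2 * r)) :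
    Fintype.card {f : Fin (2 * r) → Fin 2 // wt f = r ∧ f i0 = 0}
      = (2 * r - 1).choose (r - 1) := by
  have hadd : ∀ x : Fin 2, x ≠ 0 → x + 1 = 0 := by decide
  have hadd2 : ∀ x : Fin 2, x = 0 → x + 1 ≠ 0 := by decide
  have hwtf : ∀ f : Fin (2 * r) → Fin 2, wt f = r → wt (flip2 f) = r := by
    intro f h
    have := wt_add_wt_flip2 f
    omega
  have E : {f : Fin (2 * r) → Fin 2 // wt f = r ∧ f i0 = 0} × Bool
      ≃ {f : Fin (2 * r) → Fin 2 // wt f = r} :=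
    { toFun := fun p => ⟨if p.2 then flip2 p.1.val else p.1.val, by
        rcases p with ⟨⟨f, hw, h0'⟩, b⟩
        cases b
        · simpa using hw
        · simpa using hwtf f hw⟩
      invFun := fun q =>
        (⟨if q.val i0 = 0 then q.val else flip2 q.val, by
          by_cases hf : q.val i0 = 0
          · rw [if_pos hf]; exact ⟨q.2, hf⟩
          · rw [if_neg hf]
            exact ⟨hwtf q.val q.2, hadd _ hf⟩⟩,
          decide (¬ q.val i0 = 0))
      left_inv := by
        rintro ⟨⟨f, hw, h0'⟩, b⟩
        cases b
        · simp only [Bool.false_eq_true, if_false]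
          refine Prod.ext (Subtype.ext ?_) ?_
          · simp [h0']
          · simp [h0']
        · simp only [if_true]
          have hne : (flip2 f) i0 ≠ 0 := hadd2 _ h0'
          refine Prod.ext (Subtype.ext ?_) ?_
          · simp only [if_neg hne]
            exact flip2_flip2 f
          · simp [hne]
      right_inv := by
        rintro ⟨f, hw⟩
        by_cases hf : f i0 = 0
        · refine Subtype.ext ?_
          simp [hf]
        · refine Subtype.ext ?_
          have hb : decide (¬ f i0 = 0) = true := by simp [hf]
          simp only [if_neg hf, hb, if_true]
          exact flip2_flip2 f }
  have hcard := Fintype.card_congr E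
  rw [Fintype.card_prod, Fintype.card_bool, card_wt, choose_central r hr, mul_comm] at hcard
  exact Nat.eq_of_mul_eq_mul_left (by norm_num) hcard

lemma stable_of_gen {k X : Type} [Field k] [AddCommGroup X] [Module k X] {n : ℕ} [NeZero n]
    (ρT : Representation k (DihedralGroup n) X) (p : Submodule k X)
    (hr : ∀ y ∈ p, ρT (.r 1) y ∈ p) (hs : ∀ y ∈ p, ρT (.sr 0) y ∈ p) :
    ∀ g, ∀ y ∈ p, ρT g y ∈ p := by
  refine dihedral_closure (fun g => ∀ y ∈ p, ρT g y ∈ p) ?_ ?_ hr hs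
  · intro y hy
    simpa using hy
  · intro g h hg hh y hy
    rw [map_mul]
    exact hg _ (hh y hy)

lemma intertwine_of_gen {k X V : Type} [Field k] [AddCommGroup X] [Module k X]
    [AddCommGroup V] [Module k V] {n : ℕ} [NeZero n]
    (ρT : Representation k (DihedralGroup n) X) (p : Submodule k X)
    (ρ : Representation k (DihedralGroup n) V) (f : V ≃ₗ[k] ↥p)
    (hr : ∀ v, (f (ρ (.r 1) v) : X) = ρT (.r 1) (f v))
    (hs : ∀ v, (f (ρ (.sr 0) v) : X) = ρT (.sr 0) (f v)) :
    ∀ g v, (f (ρ g v) : X) = ρT g (f v) := by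
  refine dihedral_closure (fun g => ∀ v, (f (ρ g v) : X) = ρT g (f v)) ?_ ?_ hr hs
  · intro v
    simp
  · intro g h hg hh v
    have e1 : ρ (g * h) v = ρ g (ρ h v) := by rw [map_mul]; rfl
    rw [e1, hg, hh, ← Module.End.mul_apply, ← map_mul]

lemma fin2_expand {k : Type} [Field k] (v : Fin 2 → k) :
    v = v 0 • (Pi.single 0 1 : Fin 2 → k) + v 1 • (Pi.single 1 1 : Fin 2 → k) := by
  funext x
  fin_cases x <;> simp [Pi.single_apply]

lemma pair_equiv {k X : Type} [Field k] [AddCommGroup X] [Module k X]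
    (u w : X) (hli : LinearIndependent k ![u, w]) :
    ∃ f : (Fin 2 → k) ≃ₗ[k] Submodule.span k {u, w},
      ∀ v : Fin 2 → k, (f v : X) = v 0 • u + v 1 • w := by
  have hrange : Set.range ![u, w] = {u, w} := by
    ext x
    constructor
    · rintro ⟨i, rfl⟩
      fin_cases i <;> simp
    · rintro (rfl | rfl)
      · exact ⟨0, rfl⟩
      · exact ⟨1, rfl⟩
  have hspan : Submodule.span k (Set.range ![u, w]) = Submodule.span k ({u, w} : Set X) := by
    rw [hrange]
  refine ⟨(Pi.basisFun k (Fin 2)).equiv ((Module.Basis.span hli).map (LinearEquiv.ofEq _ _ hspan))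
    (Equiv.refl _), ?_⟩
  intro v
  have hfi : ∀ i : Fin 2,
      (((Pi.basisFun k (Fin 2)).equiv ((Module.Basis.span hli).map (LinearEquiv.ofEq _ _ hspan))
        (Equiv.refl _)) (Pi.single i 1) : X) = ![u, w] i := by
    intro i
    rw [← Pi.basisFun_apply, Module.Basis.equiv_apply, Equiv.refl_apply, Module.Basis.map_apply,
      LinearEquiv.coe_ofEq_apply, Module.Basis.span_apply]
  conv_lhs => rw [fin2_expand v]
  rw [map_add, map_smul, map_smul, Submodule.coe_add, SetLike.val_smul, SetLike.val_smul,
    hfi 0, hfi 1]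
  simp

lemma subRepIso_pair {k X : Type} [Field k] [AddCommGroup X] [Module k X] {n : ℕ} [NeZero n]
    (ρT : Representation k (DihedralGroup n) X)
    (ρ : Representation k (DihedralGroup n) (Fin 2 → k)) (ω : k) (d : ℕ)
    (hρr : ∀ v : Fin 2 → k, ρ (.r 1) v = ![ω ^ d * v 0, (ω ^ d)⁻¹ * v 1])
    (hρs : ∀ v : Fin 2 → k, ρ (.sr 0) v = ![v 1, v 0])
    (u w : X) (hli : LinearIndependent k ![u, w])
    (hru : ρT (.r 1) u = ω ^ d • u) (hrw : ρT (.r 1) w = (ω ^ d)⁻¹ • w)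
    (hsu : ρT (.sr 0) u = w) (hsw : ρT (.sr 0) w = u) :
    SubRepIso ρT (Submodule.span k {u, w}) ρ := by
  have humem : u ∈ Submodule.span k ({u, w} : Set X) :=
    Submodule.subset_span (by simp)
  have hwmem : w ∈ Submodule.span k ({u, w} : Set X) :=
    Submodule.subset_span (by simp)
  constructor
  · refine stable_of_gen ρT _ ?_ ?_
    · intro y hy
      obtain ⟨a, b, rfl⟩ := Submodule.mem_span_pair.mp hy
      rw [map_add, map_smul, map_smul, hru, hrw]
      exact Submodule.add_mem _ (Submodule.smul_mem _ _ (Submodule.smul_mem _ _ humem))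
        (Submodule.smul_mem _ _ (Submodule.smul_mem _ _ hwmem))
    · intro y hy
      obtain ⟨a, b, rfl⟩ := Submodule.mem_span_pair.mp hy
      rw [map_add, map_smul, map_smul, hsu, hsw]
      exact Submodule.add_mem _ (Submodule.smul_mem _ _ hwmem)
        (Submodule.smul_mem _ _ humem)
  · obtain ⟨f, hfv⟩ := pair_equiv u w hli
    refine ⟨f, intertwine_of_gen ρT _ ρ f ?_ ?_⟩
    · intro v
      have h2 : ρ (.r 1) v 0 = ω ^ d * v 0 := by rw [hρr]; rfl
      have h3 : ρ (.r 1) v 1 = (ω ^ d)⁻¹ * v 1 := by rw [hρr]; rfl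
      rw [hfv, hfv, h2, h3, map_add, map_smul, map_smul, hru, hrw,
        smul_smul, smul_smul, mul_comm (v 0), mul_comm (v 1)]
    · intro v
      have h2 : ρ (.sr 0) v 0 = v 1 := by rw [hρs]; rfl
      have h3 : ρ (.sr 0) v 1 = v 0 := by rw [hρs]; rfl
      rw [hfv, hfv, h2, h3, map_add, map_smul, map_smul, hsu, hsw]
      abel

lemma subRepIso_singleton {k X : Type} [Field k] [AddCommGroup X] [Module k X]
    {n : ℕ} [NeZero n]
    (ρT : Representation k (DihedralGroup n) X)
    (τ : Representation k (DihedralGroup n) k) (cr cs : k)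
    (hτr : ∀ v : k, τ (.r 1) v = cr * v) (hτs : ∀ v : k, τ (.sr 0) v = cs * v)
    (u : X) (hu : u ≠ 0)
    (hru : ρT (.r 1) u = cr • u) (hsu : ρT (.sr 0) u = cs • u) :
    SubRepIso ρT (Submodule.span k {u}) τ := by
  constructor
  · refine stable_of_gen ρT _ ?_ ?_ <;> intro y hy <;>
      obtain ⟨a, rfl⟩ := Submodule.mem_span_singleton.mp hy
    · rw [map_smul, hru]
      exact Submodule.smul_mem _ _ (Submodule.smul_mem _ _ (Submodule.mem_span_singleton_self u))
    · rw [map_smul, hsu]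
      exact Submodule.smul_mem _ _ (Submodule.smul_mem _ _ (Submodule.mem_span_singleton_self u))
  · let f : k ≃ₗ[k] Submodule.span k ({u} : Set X) :=
      LinearEquiv.toSpanNonzeroSingleton k X u hu
    have hfv : ∀ a : k, (f a : X) = a • u := fun a => rfl
    refine ⟨f, intertwine_of_gen ρT _ τ f ?_ ?_⟩
    · intro v
      rw [hfv, hfv, hτr, map_smul, hru, smul_smul, mul_comm v cr]
    · intro v
      rw [hfv, hfv, hτs, map_smul, hsu, smul_smul, mul_comm v cs]

lemma piTensorRep_tprod {k G V : Type} [Field k] [Group G] [AddCommGroup V]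
    [Module k V] (ρ : Representation k G V) (l : ℕ) (g : G) (v : Fin l → V) :
    piTensorRep ρ l g (PiTensorProduct.tprod k v)
      = PiTensorProduct.tprod k fun i => ρ g (v i) := by
  show PiTensorProduct.map (fun _ => ρ g) (PiTensorProduct.tprod k v) = _
  rw [PiTensorProduct.map_tprod]

lemma piTensor_scalar {k G : Type} [Field k] [Group G]
    (ρ : Representation k G (Fin 2 → k)) (g : G) (c : Fin 2 → k)
    (hc : ∀ j : Fin 2, ρ g (Pi.single j 1) = c j • (Pi.single j 1 : Fin 2 → k))
    (l : ℕ) (f : Fin l → Fin 2) :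
    piTensorRep ρ l g (btp k l f) = (∏ i, c (f i)) • btp k l f := by
  rw [btp, piTensorRep_tprod]
  have h1 : (fun i => ρ g (Pi.single (f i) 1))
      = fun i => c (f i) • (Pi.single (f i) 1 : Fin 2 → k) := funext fun i => hc (f i)
  rw [h1]
  exact MultilinearMap.map_smul_univ (PiTensorProduct.tprod k) (fun i => c (f i))
    (fun i => Pi.single (f i) 1)

lemma piTensor_swap {k G : Type} [Field k] [Group G]
    (ρ : Representation k G (Fin 2 → k)) (g : G)
    (hs : ∀ j : Fin 2, ρ g (Pi.single j 1) = (Pi.single (j + 1) 1 : Fin 2 → k))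
    (l : ℕ) (f : Fin l → Fin 2) :
    piTensorRep ρ l g (btp k l f) = btp k l (flip2 f) := by
  rw [btp, piTensorRep_tprod, btp]
  congr 1
  funext i
  exact hs (f i)

lemma prod_if {k : Type} [Field k] (ω : k) {l : ℕ} (f : Fin l → Fin 2) :
    (∏ i, if f i = 0 then ω else ω⁻¹) = ω ^ (l - wt f) * (ω⁻¹) ^ (wt f) := by
  rw [Finset.prod_ite, Finset.prod_const, Finset.prod_const]
  have hval : ∀ x : Fin 2, (x : ℕ) = if ¬ x = 0 then 1 else 0 := by decide
  have hwt : wt f = (Finset.univ.filter fun i => ¬ f i = 0).card := by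
    rw [Finset.card_filter, wt]
    exact Finset.sum_congr rfl fun i _ => hval (f i)
  have hsum : (Finset.univ.filter fun i => f i = 0).card
      + (Finset.univ.filter fun i => ¬ f i = 0).card = l := by
    rw [Finset.card_filter_add_card_filter_not]
    simp
  have hc : (Finset.univ.filter fun i => f i = 0).card = l - wt f := by rw [hwt]; omega
  rw [hc, ← hwt]

lemma rho_single_r {k G : Type} [Field k] [Group G]
    (ρ : Representation k G (Fin 2 → k)) (g : G) (a : k)
    (hρr : ∀ v : Fin 2 → k, ρ g v = ![a * v 0, a⁻¹ * v 1]) (j : Fin 2) :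
    ρ g (Pi.single j 1) = (if j = 0 then a else a⁻¹) • (Pi.single j 1 : Fin 2 → k) := by
  funext x
  rw [hρr]
  fin_cases j <;> fin_cases x <;> simp [Pi.single_apply]

lemma rho_single_s {k G : Type} [Field k] [Group G]
    (ρ : Representation k G (Fin 2 → k)) (g : G)
    (hρs : ∀ v : Fin 2 → k, ρ g v = ![v 1, v 0]) (j : Fin 2) :
    ρ g (Pi.single j 1) = (Pi.single (j + 1) 1 : Fin 2 → k) := by
  funext x
  rw [hρs]
  fin_cases j <;> fin_cases x <;> simp [Pi.single_apply]

end Aux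


/-- **Lemma 6.4.** Let `n = 2m` with `m > 1` odd, `char(k) = 0`, and let
`V_1, …, V_{m-1}` be the two-dimensional simple `kD_n`-modules (with `a` acting as
`diag(ω^l, ω^{-l})` and `b` swapping coordinates).  For `1 ≤ l ≤ m-1`:
(1) if `l = 2r-1` is odd, then `V_1^{⊗(2r-1)} ≅ ⊕_{j=1}^{r} C(2r-1, r-j)·V_{2j-1}`;
(2) if `l = 2r` is even, then
`V_1^{⊗2r} ≅ C(2r-1, r-1)·(V_ε ⊕ V_λ) ⊕ (⊕_{j=1}^{r} C(2r, r-j)·V_{2j})`. -/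
theorem stmt_18 {k : Type} [Field k] [IsAlgClosed k] [CharZero k]
    (m : ℕ) (hmodd : Odd m) (hm1 : 1 < m)
    (ω : k) (hω : IsPrimitiveRoot ω (2 * m))
    -- the two-dimensional simple kD_n-modules V_l
    (ρ2 : ℕ → Representation k (DihedralGroup (2 * m)) (Fin 2 → k))
    (hρ2r : ∀ (l : ℕ) (v : Fin 2 → k),
      ρ2 l (DihedralGroup.r 1) v = ![ω ^ l * v 0, (ω ^ l)⁻¹ * v 1])
    (hρ2s : ∀ (l : ℕ) (v : Fin 2 → k),
      ρ2 l (DihedralGroup.sr 0) v = ![v 1, v 0])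
    -- the linear character λ of D_n
    (lam : DihedralGroup (2 * m) →* kˣ)
    (hlamr : (lam (DihedralGroup.r 1) : k) = 1)
    (hlams : (lam (DihedralGroup.sr 0) : k) = -1)
    (l : ℕ) (hl1 : 1 ≤ l) (hlm : l ≤ m - 1) :
    -- (1) the odd case
    (∀ r : ℕ, 1 ≤ r → l = 2 * r - 1 →
      ∃ P : (Σ j : Fin r, Fin ((2 * r - 1).choose (r - 1 - (j : ℕ)))) →
          Submodule k (PiTensorProduct k fun _ : Fin l => (Fin 2 → k)),
        iSupIndep P ∧ iSup P = ⊤ ∧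
        ∀ σ, SubRepIso (piTensorRep (ρ2 1) l) (P σ) (ρ2 (2 * (σ.1 : ℕ) + 1))) ∧
    -- (2) the even case
    (∀ r : ℕ, 1 ≤ r → l = 2 * r →
      ∃ P : ((Fin ((2 * r - 1).choose (r - 1)) ⊕ Fin ((2 * r - 1).choose (r - 1))) ⊕
            (Σ j : Fin r, Fin ((2 * r).choose (r - 1 - (j : ℕ))))) →
          Submodule k (PiTensorProduct k fun _ : Fin l => (Fin 2 → k)),
        iSupIndep P ∧ iSup P = ⊤ ∧
        -- C(2r-1, r-1) copies of the trivial module V_ε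
        (∀ i, SubRepIso (piTensorRep (ρ2 1) l) (P (Sum.inl (Sum.inl i)))
          (1 : Representation k (DihedralGroup (2 * m)) k)) ∧
        -- C(2r-1, r-1) copies of V_λ
        (∀ i, SubRepIso (piTensorRep (ρ2 1) l) (P (Sum.inl (Sum.inr i)))
          (charRep k lam)) ∧
        -- C(2r, r-j) copies of V_{2j}, j = 1, …, r
        (∀ σ : Σ j : Fin r, Fin ((2 * r).choose (r - 1 - (j : ℕ))),
          SubRepIso (piTensorRep (ρ2 1) l) (P (Sum.inr σ)) (ρ2 (2 * (σ.1 : ℕ) + 2)))) := by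
  haveI : NeZero (2 * m) := ⟨by omega⟩
  have hω0 : ω ≠ 0 := by
    intro h
    have h1 := hω.pow_eq_one
    rw [h, zero_pow (by omega : 2 * m ≠ 0)] at h1
    exact zero_ne_one h1
  have hρ2r1 : ∀ v : Fin 2 → k, ρ2 1 (.r 1) v = ![ω * v 0, ω⁻¹ * v 1] := by
    intro v; rw [hρ2r 1, pow_one]
  have hc1 : ∀ j : Fin 2, ρ2 1 (.r 1) (Pi.single j 1)
      = (if j = 0 then ω else ω⁻¹) • (Pi.single j 1 : Fin 2 → k) :=
    rho_single_r (ρ2 1) _ ω hρ2r1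
  have hs1 : ∀ j : Fin 2, ρ2 1 (.sr 0) (Pi.single j 1) = (Pi.single (j + 1) 1 : Fin 2 → k) :=
    rho_single_s (ρ2 1) _ (hρ2s 1)
  have hact_r : ∀ f : Fin l → Fin 2, piTensorRep (ρ2 1) l (.r 1) (btp k l f)
      = (ω ^ (l - wt f) * (ω⁻¹) ^ (wt f)) • btp k l f := by
    intro f
    rw [piTensor_scalar (ρ2 1) _ _ hc1 l f]
    congr 1
    exact prod_if ω f
  have hact_s : ∀ f : Fin l → Fin 2, piTensorRep (ρ2 1) l (.sr 0) (btp k l f)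
      = btp k l (flip2 f) := fun f => piTensor_swap (ρ2 1) _ hs1 l f
  have hscal_hi : ∀ z o d : ℕ, z = o + d → ω ^ z * (ω⁻¹) ^ o = ω ^ d := by
    intro z o d h; rw [h, scal_hi hω0]
  have hscal_lo : ∀ z o d : ℕ, o = z + d → ω ^ z * (ω⁻¹) ^ o = (ω ^ d)⁻¹ := by
    intro z o d h; rw [h, scal_lo hω0]
  have hact_r1 : ∀ (f : Fin l → Fin 2) (d : ℕ), l = 2 * wt f + d →
      piTensorRep (ρ2 1) l (.r 1) (btp k l f) = ω ^ d • btp k l f := by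
    intro f d hd
    rw [hact_r f]
    congr 1
    exact hscal_hi _ _ _ (by have := wt_le f; omega)
  have hact_r2 : ∀ (f : Fin l → Fin 2) (d : ℕ), l + d = 2 * wt f →
      piTensorRep (ρ2 1) l (.r 1) (btp k l f) = (ω ^ d)⁻¹ • btp k l f := by
    intro f d hd
    rw [hact_r f]
    congr 1
    exact hscal_lo _ _ _ (by have := wt_le f; omega)
  have hx01 : ∀ x : Fin 2, x ≠ 0 → x + 1 = 0 := by decide
  have hx10 : ∀ x : Fin 2, x = 0 → x + 1 ≠ 0 := by decide
  constructor
  · -- odd case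
    intro r hr hl
    subst hl
    let eJ : ∀ w : ℕ, {f : Fin (2 * r - 1) → Fin 2 // wt f = w} ≃ Fin ((2 * r - 1).choose w) :=
      fun w => Fintype.equivFinOfCardEq (card_wt (2 * r - 1) w)
    let rep : (Σ j : Fin r, Fin ((2 * r - 1).choose (r - 1 - (j : ℕ)))) →
        (Fin (2 * r - 1) → Fin 2) :=
      fun σ => ((eJ (r - 1 - (σ.1 : ℕ))).symm σ.2).val
    have hrep_wt : ∀ σ, wt (rep σ) = r - 1 - (σ.1 : ℕ) := fun σ => ((eJ _).symm σ.2).2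
    have hwlow : ∀ σ, wt (rep σ) ≤ r - 1 := by
      intro σ; rw [hrep_wt]; omega
    have hwhigh : ∀ σ, r ≤ wt (flip2 (rep σ)) := by
      intro σ
      have h1 := wt_add_wt_flip2 (rep σ)
      have h2 := hrep_wt σ
      have h3 := σ.1.isLt
      omega
    have hrep_ne : ∀ σ, rep σ ≠ flip2 (rep σ) := by
      intro σ h
      have h1 := congrArg wt h
      have h2 := hwlow σ
      have h3 := hwhigh σ
      omega
    have hrep_inj : Function.Injective rep := by
      rintro ⟨⟨j, hj⟩, c⟩ ⟨⟨j', hj'⟩, c'⟩ h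
      have hw := congrArg wt h
      rw [hrep_wt ⟨⟨j, hj⟩, c⟩, hrep_wt ⟨⟨j', hj'⟩, c'⟩] at hw
      have hw' : r - 1 - j = r - 1 - j' := hw
      have hjj : j = j' := by omega
      subst hjj
      have h2 : (eJ (r - 1 - j)).symm c = (eJ (r - 1 - j)).symm c' := Subtype.ext h
      have h3 := (eJ (r - 1 - j)).symm.injective h2
      rw [h3]
    have hdisj : ∀ σ τ, σ ≠ τ →
        Disjoint ({rep σ, flip2 (rep σ)} : Set (Fin (2 * r - 1) → Fin 2))
          {rep τ, flip2 (rep τ)} := by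
      intro σ τ hne
      rw [Set.disjoint_left]
      intro x hx1 hx2
      simp only [Set.mem_insert_iff, Set.mem_singleton_iff] at hx1 hx2
      rcases hx1 with rfl | rfl <;> rcases hx2 with h | h
      · exact hne (hrep_inj h)
      · have h1 := congrArg wt h
        have h2 := hwlow σ
        have h3 := hwhigh τ
        omega
      · have h1 := congrArg wt h
        have h2 := hwhigh σ
        have h3 := hwlow τ
        omega
      · exact hne (hrep_inj (flip2_inj h))
    have hcov : ∀ f : Fin (2 * r - 1) → Fin 2,
        ∃ σ : Σ j : Fin r, Fin ((2 * r - 1).choose (r - 1 - (j : ℕ))),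
          f ∈ ({rep σ, flip2 (rep σ)} : Set (Fin (2 * r - 1) → Fin 2)) := by
      intro f
      have hlef := wt_le f
      by_cases hcase : wt f ≤ r - 1
      · have hp1 : r - 1 - wt f < r := by omega
        have hp2 : wt f = r - 1 - (r - 1 - wt f) := by omega
        refine ⟨⟨⟨r - 1 - wt f, hp1⟩,
          eJ (r - 1 - (r - 1 - wt f)) ⟨f, hp2⟩⟩, ?_⟩
        refine Set.mem_insert_iff.mpr (Or.inl ?_)
        have h6 : rep ⟨⟨r - 1 - wt f, hp1⟩, eJ (r - 1 - (r - 1 - wt f)) ⟨f, hp2⟩⟩ = f :=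
          congrArg Subtype.val ((eJ (r - 1 - (r - 1 - wt f))).symm_apply_apply ⟨f, hp2⟩)
        exact h6.symm
      · have hg : wt (flip2 f) ≤ r - 1 := by
          have := wt_add_wt_flip2 f; omega
        have hp1 : r - 1 - wt (flip2 f) < r := by omega
        have hp2 : wt (flip2 f) = r - 1 - (r - 1 - wt (flip2 f)) := by omega
        refine ⟨⟨⟨r - 1 - wt (flip2 f), hp1⟩,
          eJ (r - 1 - (r - 1 - wt (flip2 f))) ⟨flip2 f, hp2⟩⟩, ?_⟩
        refine Set.mem_insert_iff.mpr (Or.inr (Set.mem_singleton_iff.mpr ?_))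
        have h6 : rep ⟨⟨r - 1 - wt (flip2 f), hp1⟩,
            eJ (r - 1 - (r - 1 - wt (flip2 f))) ⟨flip2 f, hp2⟩⟩ = flip2 f :=
          congrArg Subtype.val
            ((eJ (r - 1 - (r - 1 - wt (flip2 f)))).symm_apply_apply ⟨flip2 f, hp2⟩)
        rw [h6, flip2_flip2]
    obtain ⟨hind, hsup⟩ := span_partition (btp_li k (2 * r - 1)) (btp_span k (2 * r - 1))
      (fun σ => ({rep σ, flip2 (rep σ)} : Set (Fin (2 * r - 1) → Fin 2))) hdisj hcov
    refine ⟨fun σ => Submodule.span k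
      (btp k (2 * r - 1) '' ({rep σ, flip2 (rep σ)} : Set (Fin (2 * r - 1) → Fin 2))),
      hind, hsup, ?_⟩
    intro σ
    simp only [Set.image_pair]
    have hli2 : LinearIndependent k
        ![btp k (2 * r - 1) (rep σ), btp k (2 * r - 1) (flip2 (rep σ))] := by
      have hcomp : ![btp k (2 * r - 1) (rep σ), btp k (2 * r - 1) (flip2 (rep σ))]
          = btp k (2 * r - 1) ∘ ![rep σ, flip2 (rep σ)] := by
        funext i; fin_cases i <;> rfl
      rw [hcomp]
      exact (btp_li k (2 * r - 1)).comp _ (vec2_inj (hrep_ne σ))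
    refine subRepIso_pair _ (ρ2 (2 * (σ.1 : ℕ) + 1)) ω (2 * (σ.1 : ℕ) + 1)
      (hρ2r _) (hρ2s _) _ _ hli2 ?_ ?_ ?_ ?_
    · refine hact_r1 (rep σ) _ ?_
      have h1 := hrep_wt σ
      have h2 := σ.1.isLt
      omega
    · refine hact_r2 (flip2 (rep σ)) _ ?_
      have h1 := wt_add_wt_flip2 (rep σ)
      have h2 := hrep_wt σ
      have h3 := σ.1.isLt
      omega
    · exact hact_s (rep σ)
    · rw [hact_s (flip2 (rep σ)), flip2_flip2]
  · -- even case
    intro r hr hl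
    subst hl
    have h2r : 0 < 2 * r := by omega
    set i0 : Fin (2 * r) := ⟨0, h2r⟩ with hi0
    let eH : {f : Fin (2 * r) → Fin 2 // wt f = r ∧ f i0 = 0}
        ≃ Fin ((2 * r - 1).choose (r - 1)) :=
      Fintype.equivFinOfCardEq (card_half r hr i0)
    let repH : Fin ((2 * r - 1).choose (r - 1)) → (Fin (2 * r) → Fin 2) :=
      fun i => (eH.symm i).val
    have hrepH : ∀ i, wt (repH i) = r ∧ (repH i) i0 = 0 := fun i => (eH.symm i).2
    have hrepH_inj : Function.Injective repH :=
      fun i i' h => eH.symm.injective (Subtype.ext h)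
    have hflipH_wt : ∀ i, wt (flip2 (repH i)) = r := by
      intro i
      have h1 := wt_add_wt_flip2 (repH i)
      have h2 := (hrepH i).1
      omega
    have hflipH_0 : ∀ i, (flip2 (repH i)) i0 ≠ 0 := fun i => hx10 _ (hrepH i).2
    let eJ : ∀ w : ℕ, {f : Fin (2 * r) → Fin 2 // wt f = w} ≃ Fin ((2 * r).choose w) :=
      fun w => Fintype.equivFinOfCardEq (card_wt (2 * r) w)
    let rep : (Σ j : Fin r, Fin ((2 * r).choose (r - 1 - (j : ℕ)))) →
        (Fin (2 * r) → Fin 2) :=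
      fun σ => ((eJ (r - 1 - (σ.1 : ℕ))).symm σ.2).val
    have hrep_wt : ∀ σ, wt (rep σ) = r - 1 - (σ.1 : ℕ) := fun σ => ((eJ _).symm σ.2).2
    have hwlow : ∀ σ, wt (rep σ) ≤ r - 1 := by
      intro σ; rw [hrep_wt]; omega
    have hwlow' : ∀ σ, wt (rep σ) ≠ r := by
      intro σ; have := hwlow σ; omega
    have hwhigh : ∀ σ, r + 1 ≤ wt (flip2 (rep σ)) := by
      intro σ
      have h1 := wt_add_wt_flip2 (rep σ)
      have h2 := hrep_wt σ
      have h3 := σ.1.isLt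
      omega
    have hwhigh' : ∀ σ, wt (flip2 (rep σ)) ≠ r := by
      intro σ; have := hwhigh σ; omega
    have hrep_ne : ∀ σ, rep σ ≠ flip2 (rep σ) := by
      intro σ h
      have h1 := congrArg wt h
      have h2 := hwlow σ
      have h3 := hwhigh σ
      omega
    have hrep_inj : Function.Injective rep := by
      rintro ⟨⟨j, hj⟩, c⟩ ⟨⟨j', hj'⟩, c'⟩ h
      have hw := congrArg wt h
      rw [hrep_wt ⟨⟨j, hj⟩, c⟩, hrep_wt ⟨⟨j', hj'⟩, c'⟩] at hw
      have hw' : r - 1 - j = r - 1 - j' := hw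
      have hjj : j = j' := by omega
      subst hjj
      have h2 : (eJ (r - 1 - j)).symm c = (eJ (r - 1 - j)).symm c' := Subtype.ext h
      have h3 := (eJ (r - 1 - j)).symm.injective h2
      rw [h3]
    let vmod : (Fin (2 * r) → Fin 2) → (PiTensorProduct k fun _ : Fin (2 * r) => (Fin 2 → k)) :=
      fun f =>
        if wt f = r then
          (if f i0 = 0 then btp k (2 * r) f + btp k (2 * r) (flip2 f)
            else btp k (2 * r) (flip2 f) - btp k (2 * r) f)
        else btp k (2 * r) f
    have hvmod_eq : ∀ f, wt f ≠ r → vmod f = btp k (2 * r) f := by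
      intro f h
      show (if wt f = r then _ else _) = _
      rw [if_neg h]
    have hvmod_lo : ∀ f, wt f = r → f i0 = 0 →
        vmod f = btp k (2 * r) f + btp k (2 * r) (flip2 f) := by
      intro f h h0
      show (if wt f = r then _ else _) = _
      rw [if_pos h, if_pos h0]
    have hvmod_hi : ∀ f, wt f = r → f i0 ≠ 0 →
        vmod f = btp k (2 * r) (flip2 f) - btp k (2 * r) f := by
      intro f h h0
      show (if wt f = r then _ else _) = _
      rw [if_pos h, if_neg h0]
    have hpairli : ∀ f g : Fin (2 * r) → Fin 2, f ≠ g →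
        LinearIndependent k ![btp k (2 * r) f, btp k (2 * r) g] := by
      intro f g hfg
      have hcomp : ![btp k (2 * r) f, btp k (2 * r) g] = btp k (2 * r) ∘ ![f, g] := by
        funext i; fin_cases i <;> rfl
      rw [hcomp]
      exact (btp_li k (2 * r)).comp _ (vec2_inj hfg)
    have hle_span : ⊤ ≤ Submodule.span k (Set.range vmod) := by
      refine le_trans (btp_span k (2 * r)) (Submodule.span_le.mpr ?_)
      rintro _ ⟨f, rfl⟩
      by_cases hwf : wt f = r
      · have hwff : wt (flip2 f) = r := by
          have := wt_add_wt_flip2 f; omega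
        by_cases h0 : f i0 = 0
        · have hv1 := hvmod_lo f hwf h0
          have hv2 : vmod (flip2 f) = btp k (2 * r) f - btp k (2 * r) (flip2 f) := by
            rw [hvmod_hi (flip2 f) hwff (hx10 _ h0), flip2_flip2]
          have hkey : btp k (2 * r) f = (2 : k)⁻¹ • (vmod f + vmod (flip2 f)) := by
            rw [hv1, hv2]
            rw [show btp k (2 * r) f + btp k (2 * r) (flip2 f)
                + (btp k (2 * r) f - btp k (2 * r) (flip2 f))
                = (2 : k) • btp k (2 * r) f from by rw [two_smul]; abel]
            rw [smul_smul, inv_mul_cancel₀ (two_ne_zero), one_smul]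
          rw [hkey]
          exact Submodule.smul_mem _ _ (Submodule.add_mem _
            (Submodule.subset_span ⟨f, rfl⟩) (Submodule.subset_span ⟨flip2 f, rfl⟩))
        · have hg0 : (flip2 f) i0 = 0 := hx01 _ h0
          have hv1 : vmod (flip2 f) = btp k (2 * r) (flip2 f) + btp k (2 * r) f := by
            rw [hvmod_lo (flip2 f) hwff hg0, flip2_flip2]
          have hv2 := hvmod_hi f hwf h0
          have hkey : btp k (2 * r) f = (2 : k)⁻¹ • (vmod (flip2 f) - vmod f) := by
            rw [hv1, hv2]
            rw [show btp k (2 * r) (flip2 f) + btp k (2 * r) f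
                - (btp k (2 * r) (flip2 f) - btp k (2 * r) f)
                = (2 : k) • btp k (2 * r) f from by rw [two_smul]; abel]
            rw [smul_smul, inv_mul_cancel₀ (two_ne_zero), one_smul]
          rw [hkey]
          exact Submodule.smul_mem _ _ (Submodule.sub_mem _
            (Submodule.subset_span ⟨flip2 f, rfl⟩) (Submodule.subset_span ⟨f, rfl⟩))
      · rw [← hvmod_eq f hwf]
        exact Submodule.subset_span ⟨f, rfl⟩
    have hvli : LinearIndependent k vmod :=
      linearIndependent_of_top_le_span_of_card_eq_finrank hle_span
        (btp_finrank k (2 * r))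
    have hdisj : ∀ s t : (Fin ((2 * r - 1).choose (r - 1)) ⊕ Fin ((2 * r - 1).choose (r - 1)))
        ⊕ (Σ j : Fin r, Fin ((2 * r).choose (r - 1 - (j : ℕ)))), s ≠ t →
        Disjoint
          (Sum.elim (Sum.elim (fun i => ({repH i} : Set (Fin (2 * r) → Fin 2)))
            (fun i => {flip2 (repH i)})) (fun σ => {rep σ, flip2 (rep σ)}) s)
          (Sum.elim (Sum.elim (fun i => ({repH i} : Set (Fin (2 * r) → Fin 2)))
            (fun i => {flip2 (repH i)})) (fun σ => {rep σ, flip2 (rep σ)}) t) := by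
      intro s t hst
      rw [Set.disjoint_left]
      intro x hx1 hx2
      apply hst
      clear hst
      rcases s with (i | i) | σ <;> rcases t with (i' | i') | τ <;>
        simp only [Sum.elim_inl, Sum.elim_inr, Set.mem_singleton_iff, Set.mem_insert_iff]
          at hx1 hx2
      · subst hx1
        rw [hrepH_inj hx2]
      · subst hx1
        exact absurd ((hrepH i).2) (by rw [hx2]; exact hflipH_0 i')
      · subst hx1
        rcases hx2 with h | h
        · exact absurd ((hrepH i).1) (by rw [h]; exact hwlow' τ)
        · exact absurd ((hrepH i).1) (by rw [h]; exact hwhigh' τ)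
      · subst hx1
        exact absurd ((hrepH i').2) (by rw [← hx2]; exact hflipH_0 i)
      · subst hx1
        rw [hrepH_inj (flip2_inj hx2)]
      · subst hx1
        rcases hx2 with h | h
        · exact absurd (hflipH_wt i) (by rw [h]; exact hwlow' τ)
        · exact absurd (hflipH_wt i) (by rw [h]; exact hwhigh' τ)
      · rcases hx1 with h | h <;> subst h
        · exact absurd ((hrepH i').1) (by rw [← hx2]; exact hwlow' σ)
        · exact absurd ((hrepH i').1) (by rw [← hx2]; exact hwhigh' σ)
      · rcases hx1 with h | h <;> subst h
        · exact absurd (hflipH_wt i') (by rw [← hx2]; exact hwlow' σ)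
        · exact absurd (hflipH_wt i') (by rw [← hx2]; exact hwhigh' σ)
      · rcases hx1 with rfl | rfl <;> rcases hx2 with h | h
        · rw [hrep_inj h]
        · exact absurd (congrArg wt h) (by
            have h2 := hwlow σ
            have h3 := hwhigh τ
            omega)
        · exact absurd (congrArg wt h) (by
            have h2 := hwhigh σ
            have h3 := hwlow τ
            omega)
        · rw [hrep_inj (flip2_inj h)]
    have hcov : ∀ f : Fin (2 * r) → Fin 2,
        ∃ s : (Fin ((2 * r - 1).choose (r - 1)) ⊕ Fin ((2 * r - 1).choose (r - 1)))
          ⊕ (Σ j : Fin r, Fin ((2 * r).choose (r - 1 - (j : ℕ)))),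
          f ∈ Sum.elim (Sum.elim (fun i => ({repH i} : Set (Fin (2 * r) → Fin 2)))
            (fun i => {flip2 (repH i)})) (fun σ => {rep σ, flip2 (rep σ)}) s := by
      intro f
      have hlef := wt_le f
      by_cases hwf : wt f = r
      · by_cases h0 : f i0 = 0
        · refine ⟨Sum.inl (Sum.inl (eH ⟨f, hwf, h0⟩)), ?_⟩
          simp only [Sum.elim_inl, Set.mem_singleton_iff]
          exact (congrArg Subtype.val (eH.symm_apply_apply ⟨f, hwf, h0⟩)).symm
        · have hwff : wt (flip2 f) = r := by
            have := wt_add_wt_flip2 f; omega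
          have hff0 : (flip2 f) i0 = 0 := hx01 _ h0
          refine ⟨Sum.inl (Sum.inr (eH ⟨flip2 f, hwff, hff0⟩)), ?_⟩
          simp only [Sum.elim_inl, Sum.elim_inr, Set.mem_singleton_iff]
          have h6 : repH (eH ⟨flip2 f, hwff, hff0⟩) = flip2 f :=
            congrArg Subtype.val (eH.symm_apply_apply ⟨flip2 f, hwff, hff0⟩)
          rw [h6, flip2_flip2]
      · by_cases hcase : wt f ≤ r - 1
        · have hp1 : r - 1 - wt f < r := by omega
          have hp2 : wt f = r - 1 - (r - 1 - wt f) := by omega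
          refine ⟨Sum.inr ⟨⟨r - 1 - wt f, hp1⟩,
            eJ (r - 1 - (r - 1 - wt f)) ⟨f, hp2⟩⟩, ?_⟩
          simp only [Sum.elim_inr]
          refine Set.mem_insert_iff.mpr (Or.inl ?_)
          have h6 : rep ⟨⟨r - 1 - wt f, hp1⟩, eJ (r - 1 - (r - 1 - wt f)) ⟨f, hp2⟩⟩ = f :=
            congrArg Subtype.val ((eJ (r - 1 - (r - 1 - wt f))).symm_apply_apply ⟨f, hp2⟩)
          exact h6.symm
        · have hg : wt (flip2 f) ≤ r - 1 := by
            have := wt_add_wt_flip2 f; omega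
          have hp1 : r - 1 - wt (flip2 f) < r := by omega
          have hp2 : wt (flip2 f) = r - 1 - (r - 1 - wt (flip2 f)) := by omega
          refine ⟨Sum.inr ⟨⟨r - 1 - wt (flip2 f), hp1⟩,
            eJ (r - 1 - (r - 1 - wt (flip2 f))) ⟨flip2 f, hp2⟩⟩, ?_⟩
          simp only [Sum.elim_inr]
          refine Set.mem_insert_iff.mpr (Or.inr (Set.mem_singleton_iff.mpr ?_))
          have h6 : rep ⟨⟨r - 1 - wt (flip2 f), hp1⟩,
              eJ (r - 1 - (r - 1 - wt (flip2 f))) ⟨flip2 f, hp2⟩⟩ = flip2 f :=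
            congrArg Subtype.val
              ((eJ (r - 1 - (r - 1 - wt (flip2 f)))).symm_apply_apply ⟨flip2 f, hp2⟩)
          rw [h6, flip2_flip2]
    obtain ⟨hind, hsup⟩ := span_partition hvli hle_span
      (Sum.elim (Sum.elim (fun i => ({repH i} : Set (Fin (2 * r) → Fin 2)))
        (fun i => {flip2 (repH i)})) (fun σ => {rep σ, flip2 (rep σ)})) hdisj hcov
    refine ⟨fun s => Submodule.span k (vmod ''
      (Sum.elim (Sum.elim (fun i => ({repH i} : Set (Fin (2 * r) → Fin 2)))
        (fun i => {flip2 (repH i)})) (fun σ => {rep σ, flip2 (rep σ)}) s)),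
      hind, hsup, ?_, ?_, ?_⟩
    · -- trivial copies
      intro i
      simp only [Sum.elim_inl, Set.image_singleton]
      rw [hvmod_lo (repH i) (hrepH i).1 (hrepH i).2]
      have hne : repH i ≠ flip2 (repH i) := by
        intro h
        exact hflipH_0 i (by rw [← h]; exact (hrepH i).2)
      refine subRepIso_singleton _ 1 1 1 (by intro v; simp) (by intro v; simp) _ ?_ ?_ ?_
      · have h6 := pair_comb_ne_zero (hpairli _ _ hne) 1 1 one_ne_zero
        rw [one_smul, one_smul] at h6
        exact h6
      · rw [map_add, hact_r1 (repH i) 0 (by rw [(hrepH i).1]; omega),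
          hact_r1 (flip2 (repH i)) 0 (by rw [hflipH_wt i]; omega)]
        simp
      · rw [map_add, hact_s, hact_s, flip2_flip2, one_smul]
        abel
    · -- lambda copies
      intro i
      simp only [Sum.elim_inl, Sum.elim_inr, Set.image_singleton]
      rw [hvmod_hi (flip2 (repH i)) (hflipH_wt i) (hflipH_0 i), flip2_flip2]
      have hne : repH i ≠ flip2 (repH i) := by
        intro h
        exact hflipH_0 i (by rw [← h]; exact (hrepH i).2)
      refine subRepIso_singleton _ (charRep k lam) 1 (-1) ?_ ?_ _ ?_ ?_ ?_
      · intro v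
        show (lam (.r 1) : k) • v = 1 * v
        rw [hlamr, one_smul, one_mul]
      · intro v
        show (lam (.sr 0) : k) • v = (-1) * v
        rw [hlams, smul_eq_mul]
      · have h6 := pair_comb_ne_zero (hpairli _ _ hne) 1 (-1) one_ne_zero
        rw [one_smul, neg_one_smul] at h6
        rw [sub_eq_add_neg]
        exact h6
      · rw [map_sub, hact_r1 (repH i) 0 (by rw [(hrepH i).1]; omega),
          hact_r1 (flip2 (repH i)) 0 (by rw [hflipH_wt i]; omega)]
        simp
      · rw [map_sub, hact_s, hact_s, flip2_flip2, neg_one_smul, neg_sub]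
    · -- 2-dimensional pieces
      intro σ
      simp only [Sum.elim_inr, Set.image_pair]
      rw [hvmod_eq (rep σ) (hwlow' σ), hvmod_eq (flip2 (rep σ)) (hwhigh' σ)]
      refine subRepIso_pair _ (ρ2 (2 * (σ.1 : ℕ) + 2)) ω (2 * (σ.1 : ℕ) + 2)
        (hρ2r _) (hρ2s _) _ _ (hpairli _ _ (hrep_ne σ)) ?_ ?_ ?_ ?_
      · refine hact_r1 (rep σ) _ ?_
        have h1 := hrep_wt σ
        have h2 := σ.1.isLt
        omega
      · refine hact_r2 (flip2 (rep σ)) _ ?_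
        have h1 := wt_add_wt_flip2 (rep σ)
        have h2 := hrep_wt σ
        have h3 := σ.1.isLt
        omega
      · exact hact_s (rep σ)
      · rw [hact_s (flip2 (rep σ)), flip2_flip2]

end HopfOrePaper
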